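/- Let (X, ν_X) and (Y, ν_Y) be probability spaces, let A ⊆ X × Y be measurable with (ν_X × ν_Y)(A) = α, and let η ∈ (0,1]. Then there is a measurable set X' ⊆ X with ν_X(X') ≥ α/2 such that the set E := {(x₁,x₂) ∈ X×X : ν_Y({y : (x₁,y) ∈ A and (x₂,y) ∈ A}) ≤ η α²/2} satisfies ν_X^{⊗2}(E ∩ (X'×X')) ≤ η · ν_X(X')². -/

import Mathlib

open MeasureTheory

open scoped ENNReal

lemma sq_lintegral_le_lintegral_sq {α : Type*} [MeasurableSpace α] (μ : Measure α)
    [IsProbabilityMeasure μ] {f : α → ℝ≥0∞} (hf : Measurable f) :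
    (∫⁻ a, f a ∂μ) ^ 2 ≤ ∫⁻ a, f a ^ 2 ∂μ := by
  have hpq : Real.HolderConjugate 2 2 := Real.holderConjugate_iff.mpr ⟨by norm_num, by norm_num⟩
  have h := ENNReal.lintegral_mul_le_Lp_mul_Lq μ hpq hf.aemeasurable
    (aemeasurable_const (b := (1 : ℝ≥0∞)))
  simp only [Pi.mul_apply, mul_one, ENNReal.one_rpow, lintegral_const, measure_univ,
    one_mul] at h
  have key : (∫⁻ a, f a ∂μ) ^ (2 : ℝ) ≤ ∫⁻ a, f a ^ (2 : ℝ) ∂μ := by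
    calc (∫⁻ a, f a ∂μ) ^ (2 : ℝ)
        ≤ ((∫⁻ a, f a ^ (2 : ℝ) ∂μ) ^ ((1 : ℝ) / 2)) ^ (2 : ℝ) :=
          ENNReal.rpow_le_rpow h (by norm_num)
      _ = (∫⁻ a, f a ^ (2 : ℝ) ∂μ) ^ ((1 : ℝ) / 2 * 2) := (ENNReal.rpow_mul _ _ _).symm
      _ = ∫⁻ a, f a ^ (2 : ℝ) ∂μ := by norm_num
  have e1 : ∀ x : ℝ≥0∞, x ^ (2 : ℝ) = x ^ 2 := fun x => by
    rw [show (2 : ℝ) = ((2 : ℕ) : ℝ) by norm_num, ENNReal.rpow_natCast]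
  calc (∫⁻ a, f a ∂μ) ^ 2 = (∫⁻ a, f a ∂μ) ^ (2 : ℝ) := (e1 _).symm
    _ ≤ ∫⁻ a, f a ^ (2 : ℝ) ∂μ := key
    _ = ∫⁻ a, f a ^ 2 ∂μ := lintegral_congr fun a => e1 _

theorem stmt10 {X Y : Type*} [MeasurableSpace X] [MeasurableSpace Y]
    (νX : Measure X) (νY : Measure Y)
    [IsProbabilityMeasure νX] [IsProbabilityMeasure νY]
    (A : Set (X × Y)) (hA : MeasurableSet A)
    (α : ℝ) (hα : ((νX.prod νY) A).toReal = α)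
    (η : ℝ) (hη0 : 0 < η) (hη1 : η ≤ 1) :
    ∃ X' : Set X, MeasurableSet X' ∧ α / 2 ≤ (νX X').toReal ∧
      ((νX.prod νX)
          ({q : X × X | (νY {y | (q.1, y) ∈ A ∧ (q.2, y) ∈ A}).toReal ≤ η * α ^ 2 / 2} ∩
            X' ×ˢ X')).toReal ≤ η * (νX X').toReal ^ 2 := by
  classical
  have hα0 : 0 ≤ α := hα ▸ ENNReal.toReal_nonneg
  set ν2 : Measure (X × X) := νX.prod νX with hν2
  -- the "bad" set of pairs
  set E : Set (X × X) :=
    {q : X × X | (νY {y | (q.1, y) ∈ A ∧ (q.2, y) ∈ A}).toReal ≤ η * α ^ 2 / 2} with hEdef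
  -- the doubled set
  set A₂ : Set ((X × X) × Y) := {p | (p.1.1, p.2) ∈ A ∧ (p.1.2, p.2) ∈ A} with hA₂def
  have hA₂ : MeasurableSet A₂ := by
    apply MeasurableSet.inter
    · exact (hA.preimage ((measurable_fst.fst).prodMk measurable_snd))
    · exact (hA.preimage ((measurable_fst.snd).prodMk measurable_snd))
  have hE : MeasurableSet E := by
    have : Measurable fun q : X × X => (νY (Prod.mk q ⁻¹' A₂)).toReal :=
      (measurable_measure_prodMk_left hA₂).ennreal_toReal
    exact measurableSet_le this measurable_const
  set B : Set ((X × X) × Y) := (E ×ˢ (Set.univ : Set Y)) ∩ A₂ with hBdef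
  have hB : MeasurableSet B := (hE.prod MeasurableSet.univ).inter hA₂
  set F : Y → ℝ≥0∞ := fun y => νX ((fun x => (x, y)) ⁻¹' A) with hFdef
  have hF : Measurable F := measurable_measure_prodMk_right hA
  set G : Y → ℝ≥0∞ := fun y => ν2 ((fun q => (q, y)) ⁻¹' B) with hGdef
  have hG : Measurable G := measurable_measure_prodMk_right hB
  have hFle : ∀ y, F y ≤ 1 := fun y => prob_le_one
  set c : ℝ≥0∞ := ENNReal.ofReal (η * α ^ 2 / 2) with hc
  have hcne : c ≠ ∞ := ENNReal.ofReal_ne_top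
  -- ∫ F = α'
  have hintF : ∫⁻ y, F y ∂νY = (νX.prod νY) A := (Measure.prod_apply_symm hA).symm
  -- ∫ G ≤ c
  have hintG : ∫⁻ y, G y ∂νY ≤ c := by
    have h1 : ∫⁻ y, G y ∂νY = (ν2.prod νY) B := (Measure.prod_apply_symm hB).symm
    rw [h1, Measure.prod_apply hB]
    have h2 : ∀ q : X × X, νY (Prod.mk q ⁻¹' B) ≤ E.indicator (fun _ => c) q := by
      intro q
      by_cases hq : q ∈ E
      · have hsub : Prod.mk q ⁻¹' B ⊆ Prod.mk q ⁻¹' A₂ := fun y hy => hy.2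
        have hle : νY (Prod.mk q ⁻¹' A₂) ≤ c := by
          have hq' : (νY (Prod.mk q ⁻¹' A₂)).toReal ≤ η * α ^ 2 / 2 := hq
          have hfin : νY (Prod.mk q ⁻¹' A₂) ≠ ∞ := measure_ne_top _ _
          rw [hc, ← ENNReal.ofReal_toReal hfin]
          exact ENNReal.ofReal_le_ofReal hq'
        simpa [Set.indicator_of_mem hq] using (measure_mono hsub).trans hle
      · have : Prod.mk q ⁻¹' B = ∅ := by
          ext y; simp [hBdef, hq]
        simp [this, Set.indicator_of_notMem hq]
    calc ∫⁻ q, νY (Prod.mk q ⁻¹' B) ∂ν2 ≤ ∫⁻ q, E.indicator (fun _ => c) q ∂ν2 :=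
          lintegral_mono h2
      _ = c * ν2 E := by rw [lintegral_indicator hE]; simp
      _ ≤ c * 1 := mul_le_mul_right prob_le_one c
      _ = c := mul_one c
  -- key existence
  have hkey : ∃ y : Y, G y + c ≤ ENNReal.ofReal η * F y ^ 2 := by
    by_contra hcon
    push_neg at hcon
    have hiu : ∫⁻ y, ENNReal.ofReal η * F y ^ 2 ∂νY ≤ ∫⁻ y, G y + c ∂νY :=
      lintegral_mono fun y => (hcon y).le
    have hrhs : ∫⁻ y, G y + c ∂νY ≤ 2 * c := by
      rw [lintegral_add_right _ measurable_const, lintegral_const, measure_univ, mul_one,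
        two_mul]
      exact add_le_add_left hintG c
    have hlhs : 2 * c ≤ ∫⁻ y, ENNReal.ofReal η * F y ^ 2 ∂νY := by
      rw [lintegral_const_mul _ (hF.pow_const 2)]
      have h1 : ((νX.prod νY) A) ^ 2 ≤ ∫⁻ y, F y ^ 2 ∂νY := by
        rw [← hintF]; exact sq_lintegral_le_lintegral_sq νY hF
      have h2 : 2 * c ≤ ENNReal.ofReal η * ((νX.prod νY) A) ^ 2 := by
        have hA' : (νX.prod νY) A = ENNReal.ofReal α := by
          rw [← hα, ENNReal.ofReal_toReal (measure_ne_top _ _)]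
        rw [hA', hc, ← ENNReal.ofReal_pow hα0, ← ENNReal.ofReal_mul hη0.le]
        rw [← ENNReal.ofReal_ofNat, ← ENNReal.ofReal_mul (by norm_num)]
        exact ENNReal.ofReal_le_ofReal (le_of_eq (by ring))
      exact h2.trans (mul_le_mul_right h1 _)
    have hfin : ∫⁻ y, ENNReal.ofReal η * F y ^ 2 ∂νY ≠ ∞ :=
      ne_top_of_le_ne_top (ENNReal.mul_ne_top ENNReal.ofNat_ne_top hcne) (hiu.trans hrhs)
    have hstrict : ∫⁻ y, ENNReal.ofReal η * F y ^ 2 ∂νY < ∫⁻ y, G y + c ∂νY :=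
      lintegral_strict_mono (IsProbabilityMeasure.ne_zero νY)
        ((hG.add measurable_const).aemeasurable) hfin (Filter.Eventually.of_forall hcon)
    exact absurd ((hlhs.trans_lt hstrict).trans_le hrhs) (lt_irrefl _)
  obtain ⟨y, hy⟩ := hkey
  have hFyfin : F y ≠ ∞ := ((hFle y).trans_lt ENNReal.one_lt_top).ne
  have hrfin : ENNReal.ofReal η * F y ^ 2 ≠ ∞ :=
    ENNReal.mul_ne_top ENNReal.ofReal_ne_top (ENNReal.pow_ne_top hFyfin)
  refine ⟨{x | (x, y) ∈ A}, hA.preimage (measurable_id.prodMk measurable_const), ?_, ?_⟩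
  · -- measure lower bound
    have h1 : c ≤ ENNReal.ofReal η * F y ^ 2 := le_trans le_add_self hy
    have hFy : νX {x | (x, y) ∈ A} = F y := rfl
    rw [hFy]
    have h2 := ENNReal.toReal_mono hrfin h1
    rw [hc, ENNReal.toReal_ofReal (by positivity), ENNReal.toReal_mul,
      ENNReal.toReal_ofReal hη0.le, ENNReal.toReal_pow] at h2
    have h3 : α ^ 2 / 2 ≤ (F y).toReal ^ 2 := by
      have := (mul_le_mul_iff_right₀ hη0).mp (by linarith : η * (α ^ 2 / 2) ≤ η * (F y).toReal ^ 2)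
      linarith
    nlinarith [ENNReal.toReal_nonneg (a := F y), sq_nonneg ((F y).toReal - α / 2),
      sq_nonneg ((F y).toReal + α / 2)]
  · -- measure upper bound
    have hset : E ∩ {x | (x, y) ∈ A} ×ˢ {x | (x, y) ∈ A} = (fun q : X × X => (q, y)) ⁻¹' B := by
      ext q
      constructor
      · rintro ⟨hqE, h1, h2⟩; exact ⟨⟨hqE, trivial⟩, h1, h2⟩
      · rintro ⟨⟨hqE, -⟩, h1, h2⟩; exact ⟨hqE, h1, h2⟩
    rw [hset]
    have hGy : ν2 ((fun q : X × X => (q, y)) ⁻¹' B) = G y := rfl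
    have hFy : νX {x | (x, y) ∈ A} = F y := rfl
    rw [hGy, hFy]
    have hle : G y ≤ ENNReal.ofReal η * F y ^ 2 := le_trans le_self_add hy
    have := ENNReal.toReal_mono hrfin hle
    rwa [ENNReal.toReal_mul, ENNReal.toReal_ofReal hη0.le, ENNReal.toReal_pow] at this
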